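/- Let H be a complex inner product space, n a natural number, u, v : Fin n → H families of vectors, and z ∈ ℂ with Im z ≠ 0. Define the n×n complex matrix K by K_{ij} := ⟨u_i, u_j⟩ + conj(z)·⟨v_i, v_j⟩ (inner product conjugate-linear in the first slot). Then for every ξ ∈ ℂⁿ, the number (Σ_{i,j} conj(ξ_i)(K_{ij} − conj(K_{ji}))ξ_j)/(z − conj(z)) is real and nonpositive; that is, (K − K*)/(z − z̄) is Hermitian negative semidefinite. -/

import Mathlib

open ComplexConjugate

/-- for families `u, v` in a complex inner product space and `z` with
`Im z ≠ 0`, the matrix `K i j = ⟨u i, u j⟩ + conj z ⟨v i, v j⟩` satisfies that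
`(K − K*)/(z − z̄)` is Hermitian negative semidefinite: for every `ξ ∈ ℂⁿ` the number
`(Σ_{i,j} conj (ξ i) (K i j − conj (K j i)) ξ j)/(z − conj z)` is real and nonpositive. -/
theorem perm_matrix_imag_part_negsemidef {H : Type*} [NormedAddCommGroup H]
    [InnerProductSpace ℂ H] (n : ℕ) (u v : Fin n → H) (z : ℂ) (hz : z.im ≠ 0)
    (K : Matrix (Fin n) (Fin n) ℂ)
    (hK : ∀ i j, K i j = (inner ℂ (u i) (u j) : ℂ) + conj z * (inner ℂ (v i) (v j) : ℂ)) :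
    ∀ ξ : Fin n → ℂ,
      ((∑ i, ∑ j, conj (ξ i) * (K i j - conj (K j i)) * ξ j) / (z - conj z)).im = 0 ∧
      ((∑ i, ∑ j, conj (ξ i) * (K i j - conj (K j i)) * ξ j) / (z - conj z)).re ≤ 0 := by
  intro ξ
  set w : H := ∑ i, ξ i • v i with hw
  have hdiff : ∀ i j, K i j - conj (K j i) = (conj z - z) * (inner ℂ (v i) (v j) : ℂ) := by
    intro i j
    rw [hK i j, hK j i]
    simp only [map_add, map_mul, Complex.conj_conj, inner_conj_symm]
    ring
  have hw2 : (inner ℂ w w : ℂ) = ∑ i, ∑ j, conj (ξ i) * (inner ℂ (v i) (v j) : ℂ) * ξ j := by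
    rw [hw, sum_inner]
    refine Finset.sum_congr rfl fun i _ => ?_
    rw [inner_sum]
    refine Finset.sum_congr rfl fun j _ => ?_
    rw [inner_smul_left, inner_smul_right]
    ring
  have hS : (∑ i, ∑ j, conj (ξ i) * (K i j - conj (K j i)) * ξ j)
      = (conj z - z) * (inner ℂ w w : ℂ) := by
    rw [hw2, Finset.mul_sum]
    refine Finset.sum_congr rfl fun i _ => ?_
    rw [Finset.mul_sum]
    refine Finset.sum_congr rfl fun j _ => ?_
    rw [hdiff i j]
    ring
  have hz' : z - conj z ≠ 0 := by
    intro h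
    apply hz
    have := congrArg Complex.im h
    simpa [Complex.sub_im, two_mul] using this
  have hval : (∑ i, ∑ j, conj (ξ i) * (K i j - conj (K j i)) * ξ j) / (z - conj z)
      = -((‖w‖ : ℂ) ^ 2) := by
    rw [hS, inner_self_eq_norm_sq_to_K]
    field_simp
    ring_nf; rfl
  rw [hval]
  constructor
  · simp [← Complex.ofReal_pow]
  · simp only [Complex.neg_re]
    have : ((‖w‖ : ℂ) ^ 2).re = ‖w‖ ^ 2 := by
      norm_cast
    rw [this]
    nlinarith [norm_nonneg w]
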